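/- Suppose the random transition matrix A is uniformly aperiodic: there is N ∈ ℕ such that every entry of A^{(N)}(η) is at least 1 for every η ∈ Ω. Fix ω ∈ Ω, v ∈ ℝ^k, and λ ∈ ℝ such that lim_{n→∞}(1/n) log ‖v·A^{(n)}(ω)‖₁ exists and equals λ, and assume that for every n ≥ 0 the vector v(θⁿω) = v·A^{(n)}(ω) has at least one strictly positive coordinate and at least one strictly negative coordinate. Then limsup_{n→∞}(1/n) log ‖𝟙·B^{(n)}(ω)‖₁ ≥ λ, where 𝟙 = (1,…,1); equivalently, the topological entropy of the subshift determined by B along the orbit of ω, limsup_{n→∞}(1/n) log Σ_{i,j} B^{(n)}_{ij}(ω), is at least λ. -/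
import Mathlib


open MeasureTheory Filter Topology

/-- The matrix cocycle: `matIter θ A n ω = A(ω)A(θω)⋯A(θ^{n-1}ω)` (with `matIter θ A 0 ω = 1`). -/
noncomputable def matIter {Ω : Type*} {k : ℕ} (θ : Ω → Ω)
    (A : Ω → Matrix (Fin k) (Fin k) ℝ) : ℕ → Ω → Matrix (Fin k) (Fin k) ℝ
  | 0, _ => 1
  | n + 1, ω => A ω * matIter θ A n (θ ω)

/-- The ℓ¹ norm of a row vector: `‖v‖₁ = Σᵢ |vᵢ|`. -/
noncomputable def l1norm {k : ℕ} (v : Fin k → ℝ) : ℝ := ∑ i, |v i|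

/-- The matrix `B(θⁿω)`: `B_{ij}(θⁿω) = A_{ij}(θⁿω)` if `(v·A^{(n)}(ω))_i > 0` and
`(v·A^{(n+1)}(ω))_j > 0`, and `0` otherwise. -/
noncomputable def Bmat {Ω : Type*} {k : ℕ} (θ : Ω → Ω)
    (A : Ω → Matrix (Fin k) (Fin k) ℝ) (v : Fin k → ℝ) (ω : Ω) (n : ℕ) :
    Matrix (Fin k) (Fin k) ℝ :=
  fun i j =>
    if 0 < Matrix.vecMul v (matIter θ A n ω) i ∧
        0 < Matrix.vecMul v (matIter θ A (n + 1) ω) j then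
      A (θ^[n] ω) i j
    else 0

/-- `BIter θ A v ω s n = B(θˢω)B(θ^{s+1}ω)⋯B(θ^{s+n-1}ω)`; in particular
`BIter θ A v ω 0 n = B^{(n)}(ω)`. -/
noncomputable def BIter {Ω : Type*} {k : ℕ} (θ : Ω → Ω)
    (A : Ω → Matrix (Fin k) (Fin k) ℝ) (v : Fin k → ℝ) (ω : Ω) :
    ℕ → ℕ → Matrix (Fin k) (Fin k) ℝ
  | _, 0 => 1
  | s, n + 1 => Bmat θ A v ω s * BIter θ A v ω (s + 1) n

section auxlemmas

variable {Ω : Type*} {k : ℕ} (θ : Ω → Ω) (A : Ω → Matrix (Fin k) (Fin k) ℝ)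
  (v : Fin k → ℝ) (ω : Ω)

lemma matIter_zero (ω : Ω) : matIter θ A 0 ω = 1 := rfl

lemma matIter_succ (n : ℕ) (ω : Ω) :
    matIter θ A (n+1) ω = A ω * matIter θ A n (θ ω) := rfl

lemma matIter_succ_right (n : ℕ) (ω : Ω) :
    matIter θ A (n+1) ω = matIter θ A n ω * A (θ^[n] ω) := by
  induction n generalizing ω with
  | zero => simp [matIter_succ, matIter_zero]
  | succ n ih =>
      rw [matIter_succ, ih (θ ω), ← mul_assoc, ← matIter_succ,
        ← Function.iterate_succ_apply]

lemma matIter_add (m n : ℕ) (ω : Ω) :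
    matIter θ A (m+n) ω = matIter θ A m ω * matIter θ A n (θ^[m] ω) := by
  induction n with
  | zero => simp [matIter_zero]
  | succ n ih =>
      rw [← Nat.add_assoc, matIter_succ_right, ih, matIter_succ_right, mul_assoc,
        show θ^[m+n] ω = θ^[n] (θ^[m] ω) by
          rw [Nat.add_comm, Function.iterate_add_apply]]

lemma BIter_zero (s : ℕ) : BIter θ A v ω s 0 = 1 := rfl

lemma BIter_succ (s n : ℕ) :
    BIter θ A v ω s (n+1) = Bmat θ A v ω s * BIter θ A v ω (s+1) n := rfl

variable (h01 : ∀ ω i j, A ω i j = 0 ∨ A ω i j = 1)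
include h01

lemma A_nonneg (ω : Ω) (i j : Fin k) : 0 ≤ A ω i j := by
  rcases h01 ω i j with h | h <;> rw [h] <;> norm_num

lemma A_le_one (ω : Ω) (i j : Fin k) : A ω i j ≤ 1 := by
  rcases h01 ω i j with h | h <;> rw [h] <;> norm_num

lemma matIter_nonneg (n : ℕ) (ω : Ω) : ∀ i j, 0 ≤ matIter θ A n ω i j := by
  induction n generalizing ω with
  | zero =>
      intro i j
      rw [matIter_zero, Matrix.one_apply]
      split <;> norm_num
  | succ n ih =>
      intro i j
      rw [matIter_succ, Matrix.mul_apply]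
      exact Finset.sum_nonneg fun l _ => mul_nonneg (A_nonneg A h01 ω i l) (ih (θ ω) l j)

lemma matIter_le (n : ℕ) (ω : Ω) : ∀ i j, matIter θ A n ω i j ≤ (k:ℝ)^n := by
  induction n generalizing ω with
  | zero =>
      intro i j
      rw [matIter_zero, pow_zero, Matrix.one_apply]
      split <;> norm_num
  | succ n ih =>
      intro i j
      rw [matIter_succ, Matrix.mul_apply, pow_succ']
      calc ∑ l, A ω i l * matIter θ A n (θ ω) l j
          ≤ ∑ _l : Fin k, 1 * (k:ℝ)^n := by
            refine Finset.sum_le_sum fun l _ => ?_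
            exact mul_le_mul (A_le_one A h01 ω i l) (ih (θ ω) l j)
              (matIter_nonneg θ A h01 n (θ ω) l j) zero_le_one
        _ = (k:ℝ) * (k:ℝ)^n := by
            rw [Finset.sum_const]
            simp [mul_comm]

lemma Bmat_nonneg (s : ℕ) (i j : Fin k) : 0 ≤ Bmat θ A v ω s i j := by
  unfold Bmat; split
  · exact A_nonneg A h01 _ i j
  · exact le_refl 0

lemma Bmat_le_A (s : ℕ) (i j : Fin k) : Bmat θ A v ω s i j ≤ A (θ^[s] ω) i j := by
  unfold Bmat; split
  · exact le_refl _
  · exact A_nonneg A h01 _ i j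

lemma BIter_nonneg (n s : ℕ) : ∀ i j, 0 ≤ BIter θ A v ω s n i j := by
  induction n generalizing s with
  | zero =>
      intro i j
      rw [BIter_zero, Matrix.one_apply]
      split <;> norm_num
  | succ n ih =>
      intro i j
      rw [BIter_succ, Matrix.mul_apply]
      exact Finset.sum_nonneg fun l _ =>
        mul_nonneg (Bmat_nonneg θ A v ω h01 s i l) (ih (s+1) l j)

lemma BIter_le_matIter (n s : ℕ) : ∀ i j,
    BIter θ A v ω s n i j ≤ matIter θ A n (θ^[s] ω) i j := by
  induction n generalizing s with
  | zero =>
      intro i j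
      rw [BIter_zero, matIter_zero]
  | succ n ih =>
      intro i j
      rw [BIter_succ, Matrix.mul_apply, matIter_succ, Matrix.mul_apply,
        ← Function.iterate_succ_apply' θ s ω]
      refine Finset.sum_le_sum fun l _ => ?_
      exact mul_le_mul (Bmat_le_A θ A v ω h01 s i l) (ih (s+1) l j)
        (BIter_nonneg θ A v ω h01 n (s+1) l j) (A_nonneg A h01 _ i l)

lemma posPart_le (n : ℕ) : ∀ s j,
    max (Matrix.vecMul v (matIter θ A (s+n) ω) j) 0 ≤
      ∑ i, max (Matrix.vecMul v (matIter θ A s ω) i) 0 * BIter θ A v ω s n i j := by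
  induction n with
  | zero =>
      intro s j
      simp [BIter_zero, Matrix.one_apply]
  | succ n ih =>
      intro s j
      have hsub : ∀ i, max (Matrix.vecMul v (matIter θ A (s+1) ω) i) 0 ≤
          ∑ l, max (Matrix.vecMul v (matIter θ A s ω) l) 0 * Bmat θ A v ω s l i := by
        intro i
        rcases lt_or_ge 0 (Matrix.vecMul v (matIter θ A (s+1) ω) i) with h | h
        · rw [max_eq_left h.le]
          have hexp : Matrix.vecMul v (matIter θ A (s+1) ω) i =
              ∑ l, Matrix.vecMul v (matIter θ A s ω) l * A (θ^[s] ω) l i := by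
            rw [matIter_succ_right, ← Matrix.vecMul_vecMul]
            simp [Matrix.vecMul, dotProduct]
          rw [hexp]
          refine Finset.sum_le_sum fun l _ => ?_
          rcases lt_or_ge 0 (Matrix.vecMul v (matIter θ A s ω) l) with hl | hl
          · rw [max_eq_left hl.le]
            unfold Bmat
            rw [if_pos ⟨hl, h⟩]
          · calc Matrix.vecMul v (matIter θ A s ω) l * A (θ^[s] ω) l i ≤ 0 :=
                  mul_nonpos_of_nonpos_of_nonneg hl (A_nonneg A h01 _ l i)
              _ = max (Matrix.vecMul v (matIter θ A s ω) l) 0 * Bmat θ A v ω s l i := by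
                  rw [max_eq_right hl, zero_mul]
        · rw [max_eq_right h]
          exact Finset.sum_nonneg fun l _ =>
            mul_nonneg (le_max_right _ _) (Bmat_nonneg θ A v ω h01 s l i)
      have hstep : s + (n+1) = (s+1) + n := by omega
      rw [hstep]
      calc max (Matrix.vecMul v (matIter θ A ((s+1)+n) ω) j) 0
          ≤ ∑ i, max (Matrix.vecMul v (matIter θ A (s+1) ω) i) 0 *
              BIter θ A v ω (s+1) n i j := ih (s+1) j
        _ ≤ ∑ i, (∑ l, max (Matrix.vecMul v (matIter θ A s ω) l) 0 * Bmat θ A v ω s l i) *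
              BIter θ A v ω (s+1) n i j := by
            refine Finset.sum_le_sum fun i _ => ?_
            exact mul_le_mul_of_nonneg_right (hsub i)
              (BIter_nonneg θ A v ω h01 n (s+1) i j)
        _ = ∑ l, max (Matrix.vecMul v (matIter θ A s ω) l) 0 *
              BIter θ A v ω s (n+1) l j := by
            rw [BIter_succ]
            simp_rw [Matrix.mul_apply, Finset.sum_mul, Finset.mul_sum, mul_assoc]
            exact Finset.sum_comm

lemma l1_le_posSum (N : ℕ) (haper : ∀ η i j, 1 ≤ matIter θ A N η i j) (s : ℕ)
    (hpos : ∃ j, 0 < Matrix.vecMul v (matIter θ A (s+N) ω) j) :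
    ∑ i, |Matrix.vecMul v (matIter θ A s ω) i| ≤
      ((k:ℝ)^N + 1) * ∑ i, max (Matrix.vecMul v (matIter θ A s ω) i) 0 := by
  obtain ⟨j, hj⟩ := hpos
  set w : Fin k → ℝ := fun i => Matrix.vecMul v (matIter θ A s ω) i with hw
  have hexp : Matrix.vecMul v (matIter θ A (s+N) ω) j =
      ∑ i, w i * matIter θ A N (θ^[s] ω) i j := by
    rw [matIter_add, ← Matrix.vecMul_vecMul]
    simp [Matrix.vecMul, dotProduct, hw]
  have hpt : ∀ i, w i * matIter θ A N (θ^[s] ω) i j ≤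
      (k:ℝ)^N * max (w i) 0 - max (-(w i)) 0 := by
    intro i
    rcases le_or_gt 0 (w i) with h | h
    · rw [max_eq_left h, max_eq_right (by linarith : -(w i) ≤ 0), sub_zero]
      nlinarith [matIter_le θ A h01 N (θ^[s] ω) i j]
    · have h1 : w i * matIter θ A N (θ^[s] ω) i j ≤ w i * 1 :=
        mul_le_mul_of_nonpos_left (haper (θ^[s] ω) i j) h.le
      rw [mul_one] at h1
      rw [max_eq_right h.le, max_eq_left (by linarith : (0:ℝ) ≤ -(w i)), mul_zero, zero_sub]
      linarith
  have hsum : (0:ℝ) < (k:ℝ)^N * (∑ i, max (w i) 0) - ∑ i, max (-(w i)) 0 := by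
    have := Finset.sum_le_sum (s := Finset.univ) (fun i _ => hpt i)
    rw [← hexp] at this
    rw [Finset.sum_sub_distrib, ← Finset.mul_sum] at this
    linarith
  have habs : ∀ i : Fin k, |w i| = max (w i) 0 + max (-(w i)) 0 := fun i =>
    (max_zero_add_max_neg_zero_eq_abs_self (w i)).symm
  have hSplus : (0:ℝ) ≤ ∑ i, max (w i) 0 :=
    Finset.sum_nonneg fun i _ => le_max_right _ _
  calc ∑ i, |w i| = (∑ i, max (w i) 0) + ∑ i, max (-(w i)) 0 := by
        simp_rw [habs]; rw [Finset.sum_add_distrib]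
    _ ≤ ((k:ℝ)^N + 1) * ∑ i, max (w i) 0 := by nlinarith

end auxlemmas

/-- Suppose `A` is uniformly aperiodic: there is `N` with all entries of
`A^{(N)}(η)` at least `1` for every `η`.  Fix `ω`, `v` and `λ` with
`lim (1/n) log ‖v·A^{(n)}(ω)‖₁ = λ`, and assume each `v(θⁿω) = v·A^{(n)}(ω)` has a strictly
positive and a strictly negative coordinate.  Then
`limsup (1/n) log ‖𝟙·B^{(n)}(ω)‖₁ ≥ λ`; equivalently, the topological entropy of the
subshift determined by `B` along the orbit of `ω`,
`limsup (1/n) log Σ_{i,j} B^{(n)}_{ij}(ω)`, is at least `λ`. -/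
theorem subshift_entropy_ge_exponent
    {Ω : Type*} [MeasurableSpace Ω]
    (ℙ : Measure Ω) [IsProbabilityMeasure ℙ]
    (θ : Ω → Ω) (hθ : MeasurePreserving θ ℙ ℙ) (hθinv : Function.Bijective θ)
    (k : ℕ) (hk : 2 ≤ k)
    (A : Ω → Matrix (Fin k) (Fin k) ℝ)
    (hAmeas : ∀ i j, Measurable fun ω => A ω i j)
    (h01 : ∀ ω i j, A ω i j = 0 ∨ A ω i j = 1)
    (N : ℕ) (haper : ∀ η i j, 1 ≤ matIter θ A N η i j)
    (ω : Ω) (v : Fin k → ℝ) (lam : ℝ)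
    (hlim : Filter.Tendsto
      (fun n : ℕ => (n : ℝ)⁻¹ * Real.log (l1norm (Matrix.vecMul v (matIter θ A n ω))))
      Filter.atTop (𝓝 lam))
    (hsign : ∀ n : ℕ,
      (∃ i, 0 < Matrix.vecMul v (matIter θ A n ω) i) ∧
      (∃ i, Matrix.vecMul v (matIter θ A n ω) i < 0)) :
    lam ≤ Filter.limsup
        (fun n : ℕ => (n : ℝ)⁻¹ *
          Real.log (l1norm (Matrix.vecMul (fun _ => (1 : ℝ)) (BIter θ A v ω 0 n))))
        Filter.atTop ∧
    lam ≤ Filter.limsup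
        (fun n : ℕ => (n : ℝ)⁻¹ *
          Real.log (∑ i : Fin k, ∑ j : Fin k, BIter θ A v ω 0 n i j))
        Filter.atTop := by
  classical
  set T : ℕ → ℝ := fun n => ∑ i : Fin k, ∑ j : Fin k, BIter θ A v ω 0 n i j with hT_def
  set g : ℕ → ℝ := fun n : ℕ => (n : ℝ)⁻¹ * Real.log (T n) with hg_def
  have hv0 : ∀ i, Matrix.vecMul v (matIter θ A 0 ω) i = v i := by
    intro i; rw [matIter_zero, Matrix.vecMul_one]
  set C : ℝ := ∑ i, max (v i) 0 with hC_def
  have hC : 0 < C := by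
    obtain ⟨i0, hi0⟩ := (hsign 0).1
    rw [hv0 i0] at hi0
    calc (0:ℝ) < max (v i0) 0 := lt_max_iff.mpr (Or.inl hi0)
      _ ≤ C := Finset.single_le_sum (f := fun i => max (v i) 0)
          (fun i _ => le_max_right (v i) 0) (Finset.mem_univ i0)
  set D : ℝ := ((k:ℝ)^N + 1) * C with hD_def
  have hD : 0 < D := by positivity
  have key : ∀ n, l1norm (Matrix.vecMul v (matIter θ A n ω)) ≤ D * T n := by
    intro n
    have h1 := l1_le_posSum θ A v ω h01 N haper n (hsign (n+N)).1
    have h2 : ∀ j, max (Matrix.vecMul v (matIter θ A n ω) j) 0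
        ≤ ∑ i, max (v i) 0 * BIter θ A v ω 0 n i j := by
      intro j
      have := posPart_le θ A v ω h01 n 0 j
      rw [Nat.zero_add] at this
      simpa [hv0] using this
    have h3 : ∀ j, (∑ i, max (v i) 0 * BIter θ A v ω 0 n i j)
        ≤ ∑ i, C * BIter θ A v ω 0 n i j := by
      intro j
      refine Finset.sum_le_sum fun i _ => ?_
      refine mul_le_mul_of_nonneg_right ?_ (BIter_nonneg θ A v ω h01 n 0 i j)
      exact Finset.single_le_sum (f := fun i => max (v i) 0)
        (fun i _ => le_max_right _ _) (Finset.mem_univ i)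
    have h4 : ∑ j, max (Matrix.vecMul v (matIter θ A n ω) j) 0 ≤ C * T n := by
      calc ∑ j, max (Matrix.vecMul v (matIter θ A n ω) j) 0
          ≤ ∑ j : Fin k, ∑ i : Fin k, C * BIter θ A v ω 0 n i j :=
            Finset.sum_le_sum fun j _ => le_trans (h2 j) (h3 j)
        _ = C * T n := by
            rw [hT_def, Finset.sum_comm]
            simp_rw [← Finset.mul_sum]
    calc l1norm (Matrix.vecMul v (matIter θ A n ω))
        ≤ ((k:ℝ)^N + 1) * ∑ j, max (Matrix.vecMul v (matIter θ A n ω) j) 0 := h1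
      _ ≤ ((k:ℝ)^N + 1) * (C * T n) :=
          mul_le_mul_of_nonneg_left h4 (by positivity)
      _ = D * T n := by rw [hD_def]; ring
  have hl1pos : ∀ n, 0 < l1norm (Matrix.vecMul v (matIter θ A n ω)) := by
    intro n
    obtain ⟨i, hi⟩ := (hsign n).1
    unfold l1norm
    exact Finset.sum_pos' (fun j _ => abs_nonneg _)
      ⟨i, Finset.mem_univ i, abs_pos.mpr hi.ne'⟩
  have hTpos : ∀ n, 0 < T n := by
    intro n
    have h := lt_of_lt_of_le (hl1pos n) (key n)
    rcases mul_pos_iff.mp h with ⟨_, h2⟩ | ⟨h1, _⟩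
    · exact h2
    · linarith
  have hkR : (1:ℝ) ≤ (k:ℝ) := by exact_mod_cast (by omega : 1 ≤ k)
  have hlogk : 0 ≤ Real.log k := Real.log_nonneg hkR
  have hTle : ∀ n, T n ≤ (k:ℝ)^(n+2) := by
    intro n
    have h1 : T n ≤ ∑ _i : Fin k, ∑ _j : Fin k, (k:ℝ)^n := by
      rw [hT_def]
      refine Finset.sum_le_sum fun i _ => Finset.sum_le_sum fun j _ => ?_
      exact le_trans (BIter_le_matIter θ A v ω h01 n 0 i j)
        (by simpa using matIter_le θ A h01 n ω i j)
    have h2 : (∑ _i : Fin k, ∑ _j : Fin k, ((k:ℝ)^n)) = (k:ℝ)^(n+2) := by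
      simp [Finset.sum_const, nsmul_eq_mul]
      ring
    exact h1.trans_eq h2
  have hgub : ∀ n, g n ≤ 3 * Real.log k := by
    intro n
    match n with
    | 0 =>
        have : g 0 = 0 := by rw [hg_def]; simp
        rw [this]
        positivity
    | (m+1) =>
        have hlogT : Real.log (T (m+1)) ≤ ((m:ℝ)+3) * Real.log k := by
          calc Real.log (T (m+1)) ≤ Real.log ((k:ℝ)^(m+3)) :=
                Real.log_le_log (hTpos (m+1)) (hTle (m+1))
            _ = ((m+3:ℕ):ℝ) * Real.log k := by rw [Real.log_pow]
            _ = ((m:ℝ)+3) * Real.log k := by push_cast; ring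
        have hn : (0:ℝ) < (m:ℝ)+1 := by positivity
        have hfrac : ((m:ℝ)+1)⁻¹ * ((m:ℝ)+3) ≤ 3 := by
          rw [inv_mul_le_iff₀ hn]; linarith
        calc g (m+1) = ((m:ℝ)+1)⁻¹ * Real.log (T (m+1)) := by
              rw [hg_def]; push_cast; ring_nf
          _ ≤ ((m:ℝ)+1)⁻¹ * (((m:ℝ)+3) * Real.log k) :=
              mul_le_mul_of_nonneg_left hlogT (by positivity)
          _ = (((m:ℝ)+1)⁻¹ * ((m:ℝ)+3)) * Real.log k := by ring
          _ ≤ 3 * Real.log k := mul_le_mul_of_nonneg_right hfrac hlogk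
  set u : ℕ → ℝ := fun n : ℕ =>
    (n : ℝ)⁻¹ * Real.log (l1norm (Matrix.vecMul v (matIter θ A n ω)))
      - (n : ℝ)⁻¹ * Real.log D with hu_def
  have hu_le : ∀ n, u n ≤ g n := by
    intro n
    have hlog : Real.log (l1norm (Matrix.vecMul v (matIter θ A n ω))) - Real.log D
        ≤ Real.log (T n) := by
      have h := Real.log_le_log (hl1pos n) (key n)
      rw [Real.log_mul hD.ne' (hTpos n).ne'] at h
      linarith
    have he : u n = (n:ℝ)⁻¹ *
        (Real.log (l1norm (Matrix.vecMul v (matIter θ A n ω))) - Real.log D) := by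
      rw [hu_def]; ring
    rw [he, hg_def]
    exact mul_le_mul_of_nonneg_left hlog (inv_nonneg.mpr (Nat.cast_nonneg n))
  have h0 : Tendsto (fun n : ℕ => (n:ℝ)⁻¹ * Real.log D) atTop (𝓝 0) := by
    simpa using tendsto_inv_atTop_nhds_zero_nat.mul_const (Real.log D)
  have htu : Tendsto u atTop (𝓝 lam) := by
    have := hlim.sub h0
    simpa [hu_def] using this
  have hbdd : Filter.IsBoundedUnder (· ≤ ·) Filter.atTop g :=
    Filter.isBoundedUnder_of ⟨3 * Real.log k, hgub⟩
  have hmain : lam ≤ Filter.limsup g Filter.atTop := by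
    have hco : Filter.IsCoboundedUnder (· ≤ ·) Filter.atTop u := htu.isCoboundedUnder_le
    have h := Filter.limsup_le_limsup (Filter.Eventually.of_forall hu_le) hco hbdd
    rwa [htu.limsup_eq] at h
  constructor
  · have heq : (fun n : ℕ => (n : ℝ)⁻¹ *
        Real.log (l1norm (Matrix.vecMul (fun _ => (1 : ℝ)) (BIter θ A v ω 0 n)))) = g := by
      funext n
      rw [hg_def]
      have harg : l1norm (Matrix.vecMul (fun _ => (1 : ℝ)) (BIter θ A v ω 0 n)) = T n := by
        unfold l1norm
        have habs : ∀ j, |Matrix.vecMul (fun _ => (1 : ℝ)) (BIter θ A v ω 0 n) j|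
            = ∑ i, BIter θ A v ω 0 n i j := by
          intro j
          have hval : Matrix.vecMul (fun _ => (1 : ℝ)) (BIter θ A v ω 0 n) j
              = ∑ i, BIter θ A v ω 0 n i j := by
            simp [Matrix.vecMul, dotProduct]
          rw [hval]
          exact abs_of_nonneg (Finset.sum_nonneg fun i _ => BIter_nonneg θ A v ω h01 n 0 i j)
        rw [hT_def]
        simp_rw [habs]
        exact Finset.sum_comm
      rw [harg]
    rw [heq]
    exact hmain
  · exact hmain
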